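/- Let X be a T₅ topological space and n ∈ ℕ, n ≥ 1. If f : X → ℝ satisfies D_f^{(n+1)*ε} = ∅ for every ε > 0 (i.e., f ∈ u𝒮_n(X)), then there exists a sequence (f_m) of functions in 𝒮_n(X) converging uniformly to f, where 𝒮_n(X) is the class of functions whose (n+1)-st iterated closed discontinuity set is empty. -/

import Mathlib

open Topology ENNReal Filter Set

/-- Oscillation of `f` at `x`: inf over neighbourhoods `O ∋ x` of `sup_{ξ∈O} ρ(f x, f ξ)`. -/
noncomputable def oscAt {X Y : Type*} [TopologicalSpace X] [PseudoMetricSpace Y]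
    (f : X → Y) (x : X) : ℝ≥0∞ :=
  ⨅ O ∈ 𝓝 x, ⨆ ξ ∈ O, edist (f x) (f ξ)

/-- Oscillation at `x` of the restriction of `f` to `D` (computed in the subspace `D`). -/
noncomputable def oscWithinAt {X Y : Type*} [TopologicalSpace X] [PseudoMetricSpace Y]
    (f : X → Y) (D : Set X) (x : X) : ℝ≥0∞ :=
  ⨅ O ∈ 𝓝[D] x, ⨆ ξ ∈ O, edist (f x) (f ξ)

/-- `DEps f ε = {x : ω_f(x) ≥ ε}`. -/
noncomputable def DEps {X : Type*} [TopologicalSpace X] (f : X → ℝ) (ε : ℝ) : Set X :=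
  {x | ENNReal.ofReal ε ≤ oscAt f x}

/-- Iterated ε-oscillation sets: `DIter f ε n = D_f^{n*ε}` (with `DIter f ε 0 = X`). -/
noncomputable def DIter {X : Type*} [TopologicalSpace X] (f : X → ℝ) (ε : ℝ) : ℕ → Set X
  | 0 => Set.univ
  | n + 1 => {x ∈ DIter f ε n | ENNReal.ofReal ε ≤ oscWithinAt f (DIter f ε n) x}

/-- The class `u𝒮_n(X)`. -/
def uS {X : Type*} [TopologicalSpace X] (n : ℕ) (f : X → ℝ) : Prop :=
  ∀ ε : ℝ, 0 < ε → DIter f ε (n + 1) = ∅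

/-- Iterated closed discontinuity sets `D_f^{n*0}` (with `DIter0 f 0 = X`). -/
def DIter0 {X : Type*} [TopologicalSpace X] (f : X → ℝ) : ℕ → Set X
  | 0 => Set.univ
  | n + 1 => closure {x ∈ DIter0 f n | ¬ ContinuousWithinAt f (DIter0 f n) x}

/-- The class `𝒮_n(X)`. -/
def SClass {X : Type*} [TopologicalSpace X] (n : ℕ) (f : X → ℝ) : Prop :=
  DIter0 f (n + 1) = ∅

/-- `f` is `B₁**` : the restriction of `f` to its set of discontinuity points is continuous. -/
def B1ss {X Y : Type*} [TopologicalSpace X] [PseudoMetricSpace Y] (f : X → Y) : Prop :=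
  ∀ x ∈ {x | ¬ ContinuousAt f x}, ContinuousWithinAt f {x | ¬ ContinuousAt f x} x

/-! ### Auxiliary development -/

section Diam

variable {X : Type*} [TopologicalSpace X]

/-- Diameter-oscillation of `f` at `x` within `D`. -/
noncomputable def oscD (f : X → ℝ) (D : Set X) (x : X) : ℝ≥0∞ :=
  ⨅ O ∈ 𝓝[D] x, ⨆ ξ ∈ O, ⨆ ζ ∈ O, edist (f ξ) (f ζ)

/-- Iterated diameter-oscillation sets. -/
noncomputable def EIter (f : X → ℝ) (ε : ℝ) : ℕ → Set X
  | 0 => Set.univ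
  | k + 1 => {x ∈ EIter f ε k | ENNReal.ofReal ε ≤ oscD f (EIter f ε k) x}

lemma EIter_succ_subset (f : X → ℝ) (ε : ℝ) (k : ℕ) :
    EIter f ε (k + 1) ⊆ EIter f ε k := fun _ hx => hx.1

lemma EIter_antitone (f : X → ℝ) (ε : ℝ) : Antitone (EIter f ε) :=
  antitone_nat_of_succ_le (EIter_succ_subset f ε)

lemma oscD_mono (f : X → ℝ) {A B : Set X} (h : A ⊆ B) (x : X) :
    oscD f A x ≤ oscD f B x :=
  le_iInf₂ fun O hO => iInf₂_le O (nhdsWithin_mono x h hO)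

/-- If the diameter-oscillation within `D` at `x ∈ D` is at least `2ε`, then the radius
oscillation within `D` is at least `ε`. -/
lemma ofReal_le_oscWithinAt_of_oscD {f : X → ℝ} {D : Set X} {x : X} (hx : x ∈ D)
    {ε : ℝ} (hε : 0 < ε) (h : ENNReal.ofReal (2 * ε) ≤ oscD f D x) :
    ENNReal.ofReal ε ≤ oscWithinAt f D x := by
  by_contra hlt
  rw [not_le] at hlt
  rw [oscWithinAt] at hlt
  obtain ⟨O, hO⟩ := iInf_lt_iff.mp hlt
  obtain ⟨hOmem, hs⟩ := iInf_lt_iff.mp hO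
  have hD : oscD f D x ≤ ⨆ ξ ∈ O, ⨆ ζ ∈ O, edist (f ξ) (f ζ) := iInf₂_le O hOmem
  have hbig : (⨆ ξ ∈ O, ⨆ ζ ∈ O, edist (f ξ) (f ζ)) ≤
      2 * (⨆ ξ ∈ O, edist (f x) (f ξ)) := by
    refine iSup₂_le fun ξ hξ => iSup₂_le fun ζ hζ => ?_
    calc edist (f ξ) (f ζ) ≤ edist (f ξ) (f x) + edist (f x) (f ζ) := edist_triangle _ _ _
      _ = edist (f x) (f ξ) + edist (f x) (f ζ) := by rw [edist_comm (f ξ) (f x)]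
      _ ≤ (⨆ ξ ∈ O, edist (f x) (f ξ)) + (⨆ ξ ∈ O, edist (f x) (f ξ)) := by
          gcongr
          · exact le_iSup₂_of_le ξ hξ le_rfl
          · exact le_iSup₂_of_le ζ hζ le_rfl
      _ = 2 * (⨆ ξ ∈ O, edist (f x) (f ξ)) := (two_mul _).symm
  have h2 : ENNReal.ofReal (2 * ε) = 2 * ENNReal.ofReal ε := by
    rw [ENNReal.ofReal_mul (by norm_num : (0:ℝ) ≤ 2)]
    norm_num
  have : ENNReal.ofReal (2 * ε) < 2 * ENNReal.ofReal ε := by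
    calc ENNReal.ofReal (2 * ε) ≤ oscD f D x := h
      _ ≤ 2 * (⨆ ξ ∈ O, edist (f x) (f ξ)) := le_trans hD hbig
      _ < 2 * ENNReal.ofReal ε := by
          exact ENNReal.mul_lt_mul_right (a := 2) (by norm_num) (by norm_num) hs
  rw [h2] at this
  exact lt_irrefl _ this

lemma EIter_subset_DIter (f : X → ℝ) {ε : ℝ} (hε : 0 < ε) :
    ∀ k, EIter f (2 * ε) k ⊆ DIter f ε k := by
  intro k
  induction k with
  | zero => exact fun x _ => trivial
  | succ k ih =>
    rintro x ⟨hx1, hx2⟩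
    refine ⟨ih hx1, ?_⟩
    have h1 : ENNReal.ofReal (2 * ε) ≤ oscD f (DIter f ε k) x :=
      le_trans hx2 (oscD_mono f ih x)
    exact ofReal_le_oscWithinAt_of_oscD (ih hx1) hε h1

lemma isClosed_oscD_sep (f : X → ℝ) {D : Set X} (hD : IsClosed D) (c : ℝ≥0∞) :
    IsClosed {x ∈ D | c ≤ oscD f D x} := by
  rw [← closure_subset_iff_isClosed]
  intro x hx
  have hxD : x ∈ D := hD.closure_subset (closure_mono (sep_subset _ _) hx)
  refine ⟨hxD, le_iInf₂ fun O hO => ?_⟩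
  obtain ⟨U, hUopen, hxU, hUD⟩ := mem_nhdsWithin.mp hO
  obtain ⟨y, hyU, hyD, hyosc⟩ := mem_closure_iff.mp hx U hUopen hxU
  have h1 : oscD f D y ≤ ⨆ ξ ∈ U ∩ D, ⨆ ζ ∈ U ∩ D, edist (f ξ) (f ζ) :=
    iInf₂_le _ (mem_nhdsWithin.mpr ⟨U, hUopen, hyU, fun z hz => hz⟩)
  refine le_trans (le_trans hyosc h1) ?_
  exact iSup₂_le fun ξ hξ => iSup₂_le fun ζ hζ =>
    le_iSup₂_of_le ξ (hUD hξ) (le_iSup₂_of_le ζ (hUD hζ) le_rfl)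

lemma EIter_isClosed (f : X → ℝ) (ε : ℝ) : ∀ k, IsClosed (EIter f ε k)
  | 0 => isClosed_univ
  | k + 1 => isClosed_oscD_sep f (EIter_isClosed f ε k) _

end Diam

section NormalApprox

variable {S : Type*} [TopologicalSpace S] [NormalSpace S]

lemma approx_nonneg (F : S → ℝ) (hF : ∀ s, 0 ≤ F s) {ε : ℝ} (hε : 0 < ε)
    (h : ∀ s, ∃ O ∈ 𝓝 s, ∀ t ∈ O, |F s - F t| < ε) :
    ∃ Φ : S → ℝ, Continuous Φ ∧ ∀ s, |Φ s - F s| ≤ 2 * ε := by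
  set δ : ℝ := 2 * ε with hδdef
  have hδ0 : 0 < δ := by positivity
  have hdisj : ∀ j : ℕ, Disjoint (closure {s | F s ≤ j * δ})
      (closure {s | (j + 1) * δ ≤ F s}) := by
    intro j
    rw [Set.disjoint_left]
    intro x hxA hxB
    obtain ⟨O, hO, hb⟩ := h x
    obtain ⟨a, haO, haA⟩ := mem_closure_iff_nhds.mp hxA O hO
    obtain ⟨b, hbO, hbB⟩ := mem_closure_iff_nhds.mp hxB O hO
    have h1 := abs_lt.mp (hb a haO)
    have h2 := abs_lt.mp (hb b hbO)
    simp only [mem_setOf_eq] at haA hbB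
    have : ((j : ℝ) + 1) * δ = j * δ + δ := by ring
    linarith
  choose u hu0 hu1 humem using fun j : ℕ =>
    exists_continuous_zero_one_of_isClosed isClosed_closure isClosed_closure (hdisj j)
  have hvan : ∀ (t : S) (j : ℕ), F t ≤ j * δ → u j t = 0 := fun t j ht =>
    hu0 j (subset_closure ht)
  have hone : ∀ (t : S) (j : ℕ), ((j : ℝ) + 1) * δ ≤ F t → u j t = 1 := fun t j ht =>
    hu1 j (subset_closure ht)
  set Φ : S → ℝ := fun s => ∑' j : ℕ, δ * u j s with hΦdef
  have key : ∀ (s : S) (N : ℕ), (∀ j, N ≤ j → u j s = 0) →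
      Φ s = ∑ j ∈ Finset.range N, δ * u j s := by
    intro s N hN
    exact tsum_eq_sum fun j hj => by
      rw [hN j (Nat.le_of_not_lt fun hlt => hj (Finset.mem_range.mpr hlt)), mul_zero]
  have hceil : ∀ (t : S) (j : ℕ), (⌈F t / δ⌉₊ : ℕ) ≤ j → u j t = 0 := by
    intro t j hj
    apply hvan
    have h1 : F t / δ ≤ (j : ℝ) := le_trans (Nat.le_ceil _) (by exact_mod_cast hj)
    calc F t = F t / δ * δ := by field_simp
      _ ≤ j * δ := mul_le_mul_of_nonneg_right h1 hδ0.le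
  have hΦsum : ∀ s, Φ s = ∑ j ∈ Finset.range ⌈F s / δ⌉₊, δ * u j s := fun s =>
    key s _ (hceil s)
  refine ⟨Φ, ?_, ?_⟩
  · rw [continuous_iff_continuousAt]
    intro s₀
    obtain ⟨O, hO, hb⟩ := h s₀
    set N : ℕ := ⌈(F s₀ + ε) / δ⌉₊ with hN
    have h0 : (0:ℝ) ≤ (F s₀ + ε) / δ := div_nonneg (by linarith [hF s₀]) hδ0.le
    have hNδ : F s₀ + ε ≤ N * δ := by
      calc F s₀ + ε = (F s₀ + ε) / δ * δ := by field_simp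
        _ ≤ N * δ := mul_le_mul_of_nonneg_right (Nat.le_ceil _) hδ0.le
    have hfin : ∀ t ∈ O, Φ t = ∑ j ∈ Finset.range N, δ * u j t := by
      intro t ht
      refine key t N fun j hj => ?_
      apply hvan
      have h1 := abs_lt.mp (hb t ht)
      have h2 : (N : ℝ) * δ ≤ j * δ :=
        mul_le_mul_of_nonneg_right (by exact_mod_cast hj) hδ0.le
      linarith
    have hcont : Continuous fun t => ∑ j ∈ Finset.range N, δ * u j t :=
      continuous_finset_sum _ fun j _ => continuous_const.mul (u j).continuous
    exact hcont.continuousAt.congr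
      (Filter.eventuallyEq_of_mem hO fun t ht => (hfin t ht).symm)
  · intro s
    have h0 : (0:ℝ) ≤ F s / δ := div_nonneg (hF s) hδ0.le
    set m : ℕ := ⌈F s / δ⌉₊ with hm
    set p : ℕ := ⌊F s / δ⌋₊ with hp
    have hupper : Φ s ≤ F s + δ := by
      rw [hΦsum s]
      calc ∑ j ∈ Finset.range m, δ * u j s ≤ ∑ j ∈ Finset.range m, δ := by
            refine Finset.sum_le_sum fun j _ => ?_
            have := (humem j s).2
            nlinarith
        _ = m * δ := by rw [Finset.sum_const, Finset.card_range]; ring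
        _ ≤ (F s / δ + 1) * δ := by
            have := Nat.ceil_lt_add_one h0
            nlinarith
        _ = F s + δ := by field_simp
    have hlower : F s - δ ≤ Φ s := by
      have hone' : ∀ j < p, u j s = 1 := by
        intro j hj
        apply hone
        have h1 : (j : ℝ) + 1 ≤ p := by exact_mod_cast Nat.succ_le_of_lt hj
        have h2 : (p : ℝ) ≤ F s / δ := Nat.floor_le h0
        calc ((j : ℝ) + 1) * δ ≤ (F s / δ) * δ :=
              mul_le_mul_of_nonneg_right (le_trans h1 h2) hδ0.le
          _ = F s := by field_simp
      have hsub : Finset.range p ⊆ Finset.range m :=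
        Finset.range_subset_range.mpr (Nat.floor_le_ceil _)
      have h3 : ∑ j ∈ Finset.range p, δ * u j s ≤ ∑ j ∈ Finset.range m, δ * u j s := by
        refine Finset.sum_le_sum_of_subset_of_nonneg hsub fun j _ _ => ?_
        have := (humem j s).1
        positivity
      have h4 : ∑ j ∈ Finset.range p, δ * u j s = p * δ := by
        rw [Finset.sum_congr rfl fun j hj => by
          rw [hone' j (Finset.mem_range.mp hj), mul_one]]
        rw [Finset.sum_const, Finset.card_range]; ring
      have h5 : F s - δ ≤ (p : ℝ) * δ := by
        have := Nat.lt_floor_add_one (F s / δ)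
        have h6 : F s / δ * δ < ((p : ℝ) + 1) * δ := by
          apply mul_lt_mul_of_pos_right _ hδ0
          exact_mod_cast this
        have h7 : F s / δ * δ = F s := by field_simp
        nlinarith
      rw [hΦsum s]
      calc F s - δ ≤ (p:ℝ) * δ := h5
        _ = ∑ j ∈ Finset.range p, δ * u j s := h4.symm
        _ ≤ _ := h3
    rw [abs_le]
    constructor <;> [linarith; linarith]

lemma approx_signed (F : S → ℝ) {ε : ℝ} (hε : 0 < ε)
    (h : ∀ s, ∃ O ∈ 𝓝 s, ∀ t ∈ O, |F s - F t| < ε) :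
    ∃ Φ : S → ℝ, Continuous Φ ∧ ∀ s, |Φ s - F s| ≤ 4 * ε := by
  obtain ⟨Φ₁, hc1, hb1⟩ := approx_nonneg (fun s => max (F s) 0)
    (fun s => le_max_right _ _) hε (fun s => by
      obtain ⟨O, hO, hb⟩ := h s
      exact ⟨O, hO, fun t ht =>
        lt_of_le_of_lt (abs_max_sub_max_le_abs _ _ _) (hb t ht)⟩)
  obtain ⟨Φ₂, hc2, hb2⟩ := approx_nonneg (fun s => max (-F s) 0)
    (fun s => le_max_right _ _) hε (fun s => by
      obtain ⟨O, hO, hb⟩ := h s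
      refine ⟨O, hO, fun t ht => lt_of_le_of_lt (abs_max_sub_max_le_abs _ _ _) ?_⟩
      rw [neg_sub_neg, abs_sub_comm]
      exact hb t ht)
  refine ⟨fun s => Φ₁ s - Φ₂ s, hc1.sub hc2, fun s => ?_⟩
  have h1 := hb1 s
  have h2 := hb2 s
  have h3 : max (F s) 0 - max (-F s) 0 = F s := max_zero_sub_max_neg_zero_eq_self (F s)
  have h4 := abs_le.mp h1
  have h5 := abs_le.mp h2
  have hfin : |Φ₁ s - Φ₂ s - F s| ≤ 4 * ε := by
    rw [abs_le]; constructor <;> [linarith; linarith]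
  simpa using hfin

end NormalApprox

lemma approx_on {X : Type*} [TopologicalSpace X] [T5Space X] (V : Set X) (f : X → ℝ)
    {ε : ℝ} (hε : 0 < ε)
    (h : ∀ x ∈ V, ∃ O ∈ 𝓝[V] x, ∀ ξ ∈ O, |f x - f ξ| < ε) :
    ∃ ψ : X → ℝ, ContinuousOn ψ V ∧ ∀ x ∈ V, |ψ x - f x| ≤ 4 * ε := by
  classical
  have hsub : ∀ s : V, ∃ O ∈ 𝓝 s, ∀ t ∈ O, |f (s : X) - f (t : X)| < ε := by
    rintro ⟨x, hx⟩
    obtain ⟨O, hO, hb⟩ := h x hx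
    exact ⟨Subtype.val ⁻¹' O, preimage_coe_mem_nhds_subtype.mpr hO,
      fun t ht => hb t ht⟩
  obtain ⟨Φ, hΦc, hΦb⟩ := approx_signed (S := V) (fun s => f (s : X)) hε hsub
  refine ⟨fun x => if hx : x ∈ V then Φ ⟨x, hx⟩ else 0, ?_, ?_⟩
  · rw [continuousOn_iff_continuous_restrict]
    have : V.restrict (fun x => if hx : x ∈ V then Φ ⟨x, hx⟩ else 0) = Φ := by
      funext s
      simp [Set.restrict, s.2]
    change Continuous (V.restrict (fun x => if hx : x ∈ V then Φ ⟨x, hx⟩ else 0))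
    rw [this]
    exact hΦc
  · intro x hx
    simpa [dif_pos hx] using hΦb ⟨x, hx⟩

lemma exists_SClass_approx {X : Type*} [TopologicalSpace X] [T5Space X] (n : ℕ)
    (f : X → ℝ) (hf : uS n f) {ε : ℝ} (hε : 0 < ε) :
    ∃ g : X → ℝ, SClass n g ∧ ∀ x, |g x - f x| ≤ 8 * ε := by
  classical
  set E : ℕ → Set X := EIter f (2 * ε) with hE
  have hEcl : ∀ k, IsClosed (E k) := EIter_isClosed f (2 * ε)
  have hEmono : ∀ {j k : ℕ}, j ≤ k → E k ⊆ E j := fun h => EIter_antitone f (2 * ε) h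
  have hEempty : E (n + 1) = ∅ := by
    have h1 : E (n + 1) ⊆ DIter f ε (n + 1) := EIter_subset_DIter f hε (n + 1)
    rw [hf ε hε] at h1
    exact eq_empty_iff_forall_notMem.mpr fun x hx => h1 hx
  have hosc : ∀ k, ∀ x ∈ E k \ E (k + 1),
      ∃ O ∈ 𝓝[E k \ E (k + 1)] x, ∀ ξ ∈ O, |f x - f ξ| < 2 * ε := by
    intro k x hx
    have hnot : ¬ ENNReal.ofReal (2 * ε) ≤ oscD f (E k) x := fun hle =>
      hx.2 ⟨hx.1, hle⟩
    rw [not_le, oscD] at hnot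
    obtain ⟨O, hO⟩ := iInf_lt_iff.mp hnot
    obtain ⟨hOmem, hs⟩ := iInf_lt_iff.mp hO
    have hxO : x ∈ O := mem_of_mem_nhdsWithin hx.1 hOmem
    refine ⟨O, nhdsWithin_mono x diff_subset hOmem, fun ξ hξ => ?_⟩
    have h1 : edist (f x) (f ξ) ≤ ⨆ ξ ∈ O, ⨆ ζ ∈ O, edist (f ξ) (f ζ) :=
      le_iSup₂_of_le x hxO (le_iSup₂_of_le ξ hξ le_rfl)
    have h2 : edist (f x) (f ξ) < ENNReal.ofReal (2 * ε) := lt_of_le_of_lt h1 hs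
    rw [← Real.dist_eq]
    exact edist_lt_ofReal.mp h2
  choose ψ hψc hψb using fun k =>
    approx_on (E k \ E (k + 1)) f (by positivity : (0:ℝ) < 2 * ε) (hosc k)
  set K : X → ℕ := fun x => Nat.findGreatest (fun k => x ∈ E k) n with hK
  have hK1 : ∀ x, x ∈ E (K x) := fun x =>
    Nat.findGreatest_spec (P := fun k => x ∈ E k) (Nat.zero_le n) trivial
  have hKle : ∀ x, K x ≤ n := fun x => Nat.findGreatest_le n
  have hK2 : ∀ x, x ∉ E (K x + 1) := by
    intro x
    rcases eq_or_lt_of_le (hKle x) with h | h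
    · rw [h, hEempty]; exact notMem_empty x
    · exact Nat.findGreatest_is_greatest (Nat.lt_succ_self _) h
  have hKeq : ∀ k ≤ n, ∀ x ∈ E k \ E (k + 1), K x = k := by
    intro k hk x hx
    have h1 : k ≤ K x := Nat.le_findGreatest hk hx.1
    rcases h1.lt_or_eq with h | h
    · exact absurd (hEmono h (hK1 x)) hx.2
    · exact h.symm
  set g : X → ℝ := fun x => ψ (K x) x with hg
  have hgb : ∀ x, |g x - f x| ≤ 8 * ε := by
    intro x
    have := hψb (K x) x ⟨hK1 x, hK2 x⟩
    calc |g x - f x| ≤ 4 * (2 * ε) := this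
      _ = 8 * ε := by ring
  have hgc : ∀ k ≤ n, ∀ x ∈ E k \ E (k + 1), ContinuousWithinAt g (E k) x := by
    intro k hk x hx
    have hU : (E (k + 1))ᶜ ∈ 𝓝 x := (hEcl (k + 1)).isOpen_compl.mem_nhds hx.2
    have hc : ContinuousWithinAt (ψ k) (E k \ E (k + 1)) x := hψc k x hx
    have hc2 : ContinuousWithinAt (ψ k) (E k) x := by
      rw [ContinuousWithinAt, nhdsWithin_restrict' (E k) hU]
      rw [ContinuousWithinAt] at hc
      have : E k ∩ (E (k + 1))ᶜ = E k \ E (k + 1) := rfl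
      rw [this]
      exact hc
    refine hc2.congr_of_eventuallyEq ?_ ?_
    · filter_upwards [mem_nhdsWithin_of_mem_nhds hU, self_mem_nhdsWithin] with y h1 h2
      show ψ (K y) y = ψ k y
      rw [hKeq k hk y ⟨h2, h1⟩]
    · show ψ (K x) x = ψ k x
      rw [hKeq k hk x hx]
  have hchain : ∀ k, k ≤ n + 1 → DIter0 g k ⊆ E k := by
    intro k
    induction k with
    | zero => exact fun _ x _ => trivial
    | succ k ih =>
      intro hk
      have hk' : k ≤ n := Nat.succ_le_succ_iff.mp hk
      have ihh : DIter0 g k ⊆ E k := ih (Nat.le_of_succ_le hk)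
      show closure {x ∈ DIter0 g k | ¬ ContinuousWithinAt g (DIter0 g k) x} ⊆ E (k + 1)
      rw [IsClosed.closure_subset_iff (hEcl (k + 1))]
      rintro x ⟨hx1, hx2⟩
      by_contra hxE
      exact hx2 ((hgc k hk' x ⟨ihh hx1, hxE⟩).mono ihh)
  refine ⟨g, ?_, hgb⟩
  have h1 := hchain (n + 1) le_rfl
  rw [hEempty] at h1
  exact eq_empty_iff_forall_notMem.mpr fun x hx => h1 hx

theorem stmt_11 {X : Type*} [TopologicalSpace X] [T5Space X] (n : ℕ) (hn : 1 ≤ n)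
    (f : X → ℝ) (hf : uS n f) :
    ∃ F : ℕ → X → ℝ, (∀ m, SClass n (F m)) ∧ TendstoUniformly F f atTop := by
  classical
  choose g hg1 hg2 using fun m : ℕ =>
    exists_SClass_approx n f hf (ε := 1 / ((m : ℝ) + 1)) (by positivity)
  refine ⟨g, hg1, ?_⟩
  rw [Metric.tendstoUniformly_iff]
  intro δ hδ
  have htend : Tendsto (fun m : ℕ => 8 * (1 / ((m : ℝ) + 1))) atTop (𝓝 0) := by
    have := tendsto_one_div_add_atTop_nhds_zero_nat.const_mul (8 : ℝ)
    simpa using this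
  have h2 : ∀ᶠ m : ℕ in atTop, 8 * (1 / ((m : ℝ) + 1)) < δ :=
    htend.eventually_lt_const hδ
  filter_upwards [h2] with m hm x
  calc dist (f x) (g m x) = |g m x - f x| := by rw [dist_comm, Real.dist_eq]
    _ ≤ 8 * (1 / ((m : ℝ) + 1)) := hg2 m x
    _ < δ := hm
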